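/- Let G be a bipartite graph with bipartition (X,Y), and suppose G has an orientation with maximum indegree at most k and every vertex of X has degree at least k+1 in G. Then by reversing some edges incident to vertices of X one obtains an orientation in which every vertex of X has indegree exactly k+1 and every vertex of Y has indegree at most k; in particular this orientation is proper. -/
import Mathlib


/-- An orientation of a simple graph: a relation choosing exactly one
direction for each edge, and nothing else. -/
def IsOrientation {V : Type*} (G : SimpleGraph V) (o : V → V → Prop) : Prop :=
  (∀ u v, G.Adj u v ↔ (o u v ∨ o v u)) ∧ (∀ u v, o u v → ¬ o v u)

/-- Indegree of a vertex in an orientation. -/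
noncomputable def inDeg {V : Type*} (o : V → V → Prop) (v : V) : ℕ :=
  {u | o u v}.ncard

/-- A proper orientation: adjacent vertices get distinct indegrees. -/
def IsProper {V : Type*} (G : SimpleGraph V) (o : V → V → Prop) : Prop :=
  ∀ u v, G.Adj u v → inDeg o u ≠ inDeg o v


/-- From a `k`-orientation of a bipartite graph whose `X`-side has all degrees
at least `k+1`, reversing edges incident to `X` yields an orientation where
every `x ∈ X` has indegree exactly `k+1`, every `y ∈ Y` has indegree at most
`k`; in particular it is proper. -/
theorem switch_orientation {V : Type*} [Fintype V] (G : SimpleGraph V)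
    (X Y : Set V) (hdisj : Disjoint X Y) (hcover : X ∪ Y = Set.univ)
    (hbip : ∀ u v, G.Adj u v → (u ∈ X ∧ v ∈ Y) ∨ (u ∈ Y ∧ v ∈ X))
    (k : ℕ) (o : V → V → Prop) (ho : IsOrientation G o)
    (hind : ∀ v, inDeg o v ≤ k)
    (hdeg : ∀ x ∈ X, k + 1 ≤ (G.neighborSet x).ncard) :
    ∃ o' : V → V → Prop, IsOrientation G o' ∧
      (∀ u v, (¬ (o u v ↔ o' u v)) → u ∈ X ∨ v ∈ X) ∧
      (∀ x ∈ X, inDeg o' x = k + 1) ∧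
      (∀ y ∈ Y, inDeg o' y ≤ k) ∧
      IsProper G o' := by
  classical
  -- vertices in X are not adjacent to each other
  have hnXX : ∀ u v, G.Adj u v → u ∈ X → v ∈ X → False := by
    intro u v h hu hv
    rcases hbip u v h with ⟨_, hvY⟩ | ⟨huY, _⟩
    · exact hdisj.le_bot ⟨hv, hvY⟩
    · exact hdisj.le_bot ⟨hu, huY⟩
  -- in-neighbors in the original orientation are neighbors
  have hsubnb : ∀ x, {u | o u x} ⊆ G.neighborSet x := by
    intro x u hu
    exact ((ho.1 u x).mpr (Or.inl hu)).symm
  -- choose for each x ∈ X a set of k+1 neighbors containing all in-neighbors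
  have hS : ∀ x ∈ X, ∃ S : Set V, {u | o u x} ⊆ S ∧ S ⊆ G.neighborSet x ∧
      S.ncard = k + 1 := by
    intro x hx
    exact Set.exists_subsuperset_card_eq (hsubnb x)
      (le_trans (hind x) (Nat.le_succ k)) (hdeg x hx)
  set S : V → Set V := fun x => if h : x ∈ X then (hS x h).choose else ∅ with hSdef
  have hS1 : ∀ x ∈ X, {u | o u x} ⊆ S x := by
    intro x hx; simp only [hSdef, dif_pos hx]; exact (hS x hx).choose_spec.1
  have hS2 : ∀ x ∈ X, S x ⊆ G.neighborSet x := by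
    intro x hx; simp only [hSdef, dif_pos hx]; exact (hS x hx).choose_spec.2.1
  have hS3 : ∀ x ∈ X, (S x).ncard = k + 1 := by
    intro x hx; simp only [hSdef, dif_pos hx]; exact (hS x hx).choose_spec.2.2
  refine ⟨fun u v => (v ∈ X ∧ G.Adj u v ∧ u ∈ S v) ∨ (u ∈ X ∧ G.Adj u v ∧ v ∉ S u),
    ⟨?_, ?_⟩, ?_, ?_, ?_, ?_⟩
  · intro u v
    constructor
    · intro h
      rcases hbip u v h with ⟨hu, hv⟩ | ⟨hu, hv⟩
      · by_cases hm : v ∈ S u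
        · exact Or.inr (Or.inl ⟨hu, h.symm, hm⟩)
        · exact Or.inl (Or.inr ⟨hu, h, hm⟩)
      · by_cases hm : u ∈ S v
        · exact Or.inl (Or.inl ⟨hv, h, hm⟩)
        · exact Or.inr (Or.inr ⟨hv, h.symm, hm⟩)
    · rintro ((⟨_, h, _⟩ | ⟨_, h, _⟩) | (⟨_, h, _⟩ | ⟨_, h, _⟩)) <;>
        first | exact h | exact h.symm
  · rintro u v (⟨hvX, h, hu⟩ | ⟨huX, h, hv⟩) (⟨huX, h2, hv2⟩ | ⟨hvX2, h2, hu2⟩)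
    · exact hnXX u v h huX hvX
    · exact hu2 hu
    · exact hv hv2
    · exact hnXX u v h huX hvX2
  · intro u v hne
    by_contra hc
    push_neg at hc
    apply hne
    constructor
    · intro h
      exact absurd (hbip u v ((ho.1 u v).mpr (Or.inl h))) (by
        rintro (⟨hu, _⟩ | ⟨_, hv⟩); exacts [hc.1 hu, hc.2 hv])
    · rintro (⟨hvX, _, _⟩ | ⟨huX, _, _⟩)
      exacts [absurd hvX hc.2, absurd huX hc.1]
  · intro x hx
    have : {u | (x ∈ X ∧ G.Adj u x ∧ u ∈ S x) ∨ (u ∈ X ∧ G.Adj u x ∧ x ∉ S u)} = S x := by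
      ext u
      simp only [Set.mem_setOf_eq]
      constructor
      · rintro (⟨_, _, hu⟩ | ⟨huX, h, _⟩)
        · exact hu
        · exact absurd (hnXX u x h huX hx) not_false
      · intro hu
        exact Or.inl ⟨hx, (hS2 x hx hu).symm, hu⟩
    rw [inDeg, this, hS3 x hx]
  · intro y hy
    have hyX : y ∉ X := fun h => hdisj.le_bot ⟨h, hy⟩
    refine le_trans ?_ (hind y)
    apply Set.ncard_le_ncard _ (Set.toFinite _)
    rintro u (⟨hyX2, _, _⟩ | ⟨huX, h, hns⟩)
    · exact absurd hyX2 hyX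
    · -- y ∉ S u, but all in-neighbors of u are in S u, so ¬ o y u, hence o u y
      have hnoyu : ¬ o y u := fun hoyu => hns (hS1 u huX hoyu)
      rcases (ho.1 u y).mp h with h' | h'
      · exact h'
      · exact absurd h' hnoyu
  · -- properness needs the two previous facts; reprove them inline via rcases on hbip
    intro u v h
    have key : ∀ w ∈ X, inDeg (fun a b => (b ∈ X ∧ G.Adj a b ∧ a ∈ S b) ∨
        (a ∈ X ∧ G.Adj a b ∧ b ∉ S a)) w = k + 1 := by
      intro x hx
      have : {u | (x ∈ X ∧ G.Adj u x ∧ u ∈ S x) ∨ (u ∈ X ∧ G.Adj u x ∧ x ∉ S u)} = S x := by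
        ext u
        simp only [Set.mem_setOf_eq]
        constructor
        · rintro (⟨_, _, hu⟩ | ⟨huX, h, _⟩)
          · exact hu
          · exact absurd (hnXX u x h huX hx) not_false
        · intro hu
          exact Or.inl ⟨hx, (hS2 x hx hu).symm, hu⟩
      rw [inDeg, this, hS3 x hx]
    have keyY : ∀ y ∈ Y, inDeg (fun a b => (b ∈ X ∧ G.Adj a b ∧ a ∈ S b) ∨
        (a ∈ X ∧ G.Adj a b ∧ b ∉ S a)) y ≤ k := by
      intro y hy
      have hyX : y ∉ X := fun h => hdisj.le_bot ⟨h, hy⟩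
      refine le_trans ?_ (hind y)
      apply Set.ncard_le_ncard _ (Set.toFinite _)
      rintro u (⟨hyX2, _, _⟩ | ⟨huX, hadj, hns⟩)
      · exact absurd hyX2 hyX
      · have hnoyu : ¬ o y u := fun hoyu => hns (hS1 u huX hoyu)
        rcases (ho.1 u y).mp hadj with h' | h'
        · exact h'
        · exact absurd h' hnoyu
    rcases hbip u v h with ⟨hu, hv⟩ | ⟨hu, hv⟩
    · rw [key u hu]
      have := keyY v hv
      omega
    · rw [key v hv]
      have := keyY u hu
      intro hEq
      omega
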